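/- arXiv:1703.00591 — 2 statements merged into one kernel-verified Lean document; each statement's English description precedes it below -/
import Mathlib

section
/- For any nonsingular W ∈ ℝ^{n×n}, the matrix Bdiag_{τ_n}(Wᵀ W) is symmetric positive definite, and W · [Bdiag_{τ_n}(Wᵀ W)]^{−1/2} belongs to 𝕎_{τ_n}, where [·]^{−1/2} denotes the inverse of the symmetric positive definite square root. -/
open Matrix BigOperators Kronecker
open scoped ENNReal

namespace JBD

/-- Index type for `τ_n`-block partitioned `n×n` matrices, where the partition
`τ_n = (n 0, …, n (t-1))`. -/
abbrev BlkIdx {t : ℕ} (n : Fin t → ℕ) := Σ j : Fin t, Fin (n j)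

variable {t : ℕ} {n : Fin t → ℕ}

/-- The `τ_n`-block diagonal part `Bdiag_{τ_n}(A)`. -/
def bdiag (A : Matrix (BlkIdx n) (BlkIdx n) ℝ) : Matrix (BlkIdx n) (BlkIdx n) ℝ :=
  fun p q => if p.1 = q.1 then A p q else 0

/-- The `τ_n`-off-block diagonal part `OffBdiag_{τ_n}(A)`. -/
def offBdiag (A : Matrix (BlkIdx n) (BlkIdx n) ℝ) : Matrix (BlkIdx n) (BlkIdx n) ℝ :=
  A - bdiag A

/-- `A ∈ 𝔻_{τ_n}`, i.e. `A` is `τ_n`-block diagonal. -/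
def IsBlockDiag (A : Matrix (BlkIdx n) (BlkIdx n) ℝ) : Prop :=
  ∀ p q : BlkIdx n, p.1 ≠ q.1 → A p q = 0

/-- `P` is a permutation matrix. -/
def IsPermMatrix {I : Type*} [DecidableEq I] [Fintype I] (P : Matrix I I ℝ) : Prop :=
  ∃ σ : Equiv.Perm I, P = σ.permMatrix ℝ

/-- `P ∈ ℙ_{τ_n}`: a `τ_n`-block diagonal preserving permutation matrix. -/
def IsBDPerm (P : Matrix (BlkIdx n) (BlkIdx n) ℝ) : Prop :=
  IsPermMatrix P ∧
    ∀ D : Matrix (BlkIdx n) (BlkIdx n) ℝ, IsBlockDiag D → IsBlockDiag (Pᵀ * D * P)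

/-- `W ∈ 𝕎_{τ_n}`: nonsingular with `Bdiag_{τ_n}(Wᵀ W) = I`. -/
def MemW (W : Matrix (BlkIdx n) (BlkIdx n) ℝ) : Prop :=
  IsUnit W ∧ bdiag (Wᵀ * W) = 1

/-- `W` is a `τ_n`-block diagonalizer of the matrix set `𝒜 = {A i}`. -/
def IsDiagonalizer {m : ℕ} (A : Fin m → Matrix (BlkIdx n) (BlkIdx n) ℝ)
    (W : Matrix (BlkIdx n) (BlkIdx n) ℝ) : Prop :=
  IsUnit W ∧ ∀ i, IsBlockDiag (Wᵀ * A i * W)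

/-- The JBDP for `𝒜` is uniquely `τ_n`-block diagonalizable. -/
def UniquelyBD {m : ℕ} (A : Fin m → Matrix (BlkIdx n) (BlkIdx n) ℝ) : Prop :=
  (∃ W, IsDiagonalizer A W) ∧
    ∀ W W', IsDiagonalizer A W → IsDiagonalizer A W' →
      ∃ D P : Matrix (BlkIdx n) (BlkIdx n) ℝ,
        IsBlockDiag D ∧ IsUnit D ∧ IsBDPerm P ∧ W' = W * D * P

/-- The `j`-th diagonal block of a `τ_n`-partitioned matrix. -/
def dblock (A : Matrix (BlkIdx n) (BlkIdx n) ℝ) (j : Fin t) :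
    Matrix (Fin (n j)) (Fin (n j)) ℝ := fun x y => A ⟨j, x⟩ ⟨j, y⟩

/-- A family `B = {B i}` of `N×N` matrices can be (further) simultaneously block
diagonalized by congruence, with respect to some partition of `N` of cardinality `≥ 2`. -/
def CanSplit {N m : ℕ} (B : Fin m → Matrix (Fin N) (Fin N) ℝ) : Prop :=
  ∃ (s : ℕ) (k : Fin s → ℕ), 2 ≤ s ∧ (∀ j, 0 < k j) ∧ (∑ j, k j) = N ∧
    ∃ (e : Fin N ≃ BlkIdx k) (V : Matrix (Fin N) (Fin N) ℝ), IsUnit V ∧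
      ∀ i, IsBlockDiag (Matrix.reindex e e (Vᵀ * B i * V))

/-- The subspace `𝒩(ℬ) = {Z : B i * Z - Zᵀ * B i = 0 for all i}`. -/
def nSubmodule {m : ℕ} {I : Type*} [Fintype I] (B : Fin m → Matrix I I ℝ) :
    Submodule ℝ (Matrix I I ℝ) where
  carrier := {Z | ∀ i, B i * Z - Zᵀ * B i = 0}
  add_mem' := by
    intro a b ha hb i
    have h1 := ha i
    have h2 := hb i
    have : (B i * a - aᵀ * B i) + (B i * b - bᵀ * B i) = 0 := by rw [h1, h2, add_zero]
    calc B i * (a + b) - (a + b)ᵀ * B i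
        = (B i * a - aᵀ * B i) + (B i * b - bᵀ * B i) := by
          rw [Matrix.mul_add, Matrix.transpose_add, Matrix.add_mul]; abel
      _ = 0 := this
  zero_mem' := by intro i; simp
  smul_mem' := by
    intro c Z hZ i
    have h := hZ i
    calc B i * (c • Z) - (c • Z)ᵀ * B i = c • (B i * Z - Zᵀ * B i) := by
          rw [Matrix.mul_smul, Matrix.transpose_smul, Matrix.smul_mul, smul_sub]
      _ = 0 := by rw [h, smul_zero]

/-- Frobenius norm. -/
noncomputable def frob {I J : Type*} [Fintype I] [Fintype J] (A : Matrix I J ℝ) : ℝ :=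
  Real.sqrt (∑ i, ∑ j, (A i j) ^ 2)

/-- Spectral norm (operator 2-norm). -/
noncomputable def spec {I : Type*} [Fintype I] [DecidableEq I] (A : Matrix I I ℝ) : ℝ :=
  ‖Matrix.toEuclideanCLM (𝕜 := ℝ) A‖

/-- Singular values of a real matrix: square roots of the eigenvalues of `Aᵀ * A`
(one for each column index). -/
noncomputable def sv {I J : Type*} [Fintype I] [Fintype J] [DecidableEq J]
    (A : Matrix I J ℝ) (k : J) : ℝ :=
  Real.sqrt ((show (Aᵀ * A).IsHermitian by
    simpa [Matrix.conjTranspose_eq_transpose_of_trivial] using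
      Matrix.isHermitian_conjTranspose_mul_self A).eigenvalues k)

/-- The smallest singular value. -/
noncomputable def sigmaMin {I J : Type*} [Fintype I] [Fintype J] [DecidableEq J]
    (A : Matrix I J ℝ) : ℝ :=
  ⨅ k : J, sv A k

/-- The smallest nonzero singular value. -/
noncomputable def minNonzeroSV {I J : Type*} [Fintype I] [Fintype J] [DecidableEq J]
    (A : Matrix I J ℝ) : ℝ :=
  sInf {s | (∃ k, sv A k = s) ∧ s ≠ 0}

/-- The list of singular values sorted in increasing order. -/
noncomputable def svSorted {I J : Type*} [Fintype I] [Fintype J] [DecidableEq J]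
    (A : Matrix I J ℝ) : List ℝ :=
  (Finset.univ.val.map (sv A)).sort (· ≤ ·)

/-- The second smallest singular value. -/
noncomputable def secondSmallestSV {I J : Type*} [Fintype I] [Fintype J] [DecidableEq J]
    (A : Matrix I J ℝ) : ℝ :=
  (svSorted A).getD 1 0

/-- The matrix `G_{jk}` (for `j < k`), built from the diagonal blocks
`Aj i = A_i^{(jj)}` (size `a`) and `Ak i = A_i^{(kk)}` (size `b`). -/
noncomputable def Gjk {m a b : ℕ} (Aj : Fin m → Matrix (Fin a) (Fin a) ℝ)
    (Ak : Fin m → Matrix (Fin b) (Fin b) ℝ) :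
    Matrix (Fin m × ((Fin b × Fin a) ⊕ (Fin b × Fin a))) ((Fin b × Fin a) ⊕ (Fin b × Fin a)) ℝ :=
  fun r c =>
    Matrix.fromBlocks
      ((1 : Matrix (Fin b) (Fin b) ℝ) ⊗ₖ Aj r.1) ((Ak r.1)ᵀ ⊗ₖ (1 : Matrix (Fin a) (Fin a) ℝ))
      ((1 : Matrix (Fin b) (Fin b) ℝ) ⊗ₖ (Aj r.1)ᵀ) (Ak r.1 ⊗ₖ (1 : Matrix (Fin a) (Fin a) ℝ))
      r.2 c

/-- Column-major vectorization: `vecM Z (c, r) = Z r c`. -/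
def vecM {a b : ℕ} (Z : Matrix (Fin a) (Fin b) ℝ) : Fin b × Fin a → ℝ :=
  fun p => Z p.2 p.1

/-- The perfect-shuffle permutation matrix `Π_j`, satisfying
`shuffle a *ᵥ vecM Zᵀ = vecM Z`. -/
def shuffle (a : ℕ) : Matrix (Fin a × Fin a) (Fin a × Fin a) ℝ :=
  fun p q => if q = p.swap then 1 else 0

/-- The matrix `G_{jj}`, built from the diagonal blocks `Aj i = A_i^{(jj)}` (size `a`):
its `i`-th block row is `I ⊗ Aj i - ((Aj i)ᵀ ⊗ I) * Π_j`. -/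
noncomputable def Gjj {m a : ℕ} (Aj : Fin m → Matrix (Fin a) (Fin a) ℝ) :
    Matrix (Fin m × (Fin a × Fin a)) (Fin a × Fin a) ℝ :=
  fun r c =>
    ((1 : Matrix (Fin a) (Fin a) ℝ) ⊗ₖ Aj r.1
      - ((Aj r.1)ᵀ ⊗ₖ (1 : Matrix (Fin a) (Fin a) ℝ)) * shuffle a) r.2 c

/-- The matrix `M_{jk}` from Theorem 2.1, `M_{jk} = G_{jk}ᵀ G_{jk}`. -/
noncomputable def Mjk {m a b : ℕ} (Aj : Fin m → Matrix (Fin a) (Fin a) ℝ)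
    (Ak : Fin m → Matrix (Fin b) (Fin b) ℝ) :
    Matrix ((Fin b × Fin a) ⊕ (Fin b × Fin a)) ((Fin b × Fin a) ⊕ (Fin b × Fin a)) ℝ :=
  ∑ i, Matrix.fromBlocks
    ((1 : Matrix (Fin b) (Fin b) ℝ) ⊗ₖ ((Aj i)ᵀ * Aj i + Aj i * (Aj i)ᵀ))
    (Ak i ⊗ₖ Aj i + (Ak i)ᵀ ⊗ₖ (Aj i)ᵀ)
    (Ak i ⊗ₖ Aj i + (Ak i)ᵀ ⊗ₖ (Aj i)ᵀ)
    (((Ak i)ᵀ * Ak i + Ak i * (Ak i)ᵀ) ⊗ₖ (1 : Matrix (Fin a) (Fin a) ℝ))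

/-- The modulus of uniqueness `ω_uniq = min_{j<k} σ_min(G_{jk})`, in terms of the
family of diagonal blocks `Ab j i = A_i^{(jj)}`. -/
noncomputable def omegaUniq {m : ℕ}
    (Ab : ∀ j : Fin t, Fin m → Matrix (Fin (n j)) (Fin (n j)) ℝ) : ℝ :=
  ⨅ p : {p : Fin t × Fin t // p.1 < p.2}, sigmaMin (Gjk (Ab p.1.1) (Ab p.1.2))

/-- The modulus of non-divisibility `ω_rob` (`+∞` when `τ_n = (1,…,1)`), in terms of
the family of diagonal blocks `Ab j i = A_i^{(jj)}`. -/
noncomputable def omegaRob {m : ℕ}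
    (Ab : ∀ j : Fin t, Fin m → Matrix (Fin (n j)) (Fin (n j)) ℝ) : ℝ≥0∞ :=
  ⨅ (j : Fin t) (_ : 1 < n j), ENNReal.ofReal (minNonzeroSV (Gjj (Ab j)))

/-- The matrix `Γ = diag(γ_1 I_{n_1}, …, γ_t I_{n_t})`. -/
def gmat (γ : Fin t → ℝ) : Matrix (BlkIdx n) (BlkIdx n) ℝ :=
  Matrix.diagonal (fun p => γ p.1)

/-- The gap `g = min_{j ≠ k} |γ_j - γ_k|`. -/
noncomputable def gammaGap (γ : Fin t → ℝ) : ℝ :=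
  ⨅ p : {p : Fin t × Fin t // p.1 ≠ p.2}, |γ p.1.1 - γ p.1.2|

/-- The multiset of complex eigenvalues (with algebraic multiplicity) of a real
square matrix: the roots of its characteristic polynomial over `ℂ`. -/
noncomputable def eigMultiset {I : Type*} [Fintype I] [DecidableEq I]
    (Z : Matrix I I ℝ) : Multiset ℂ :=
  (Z.map (Complex.ofReal)).charpoly.roots

/-- The `j`-th block column of `P`, with its `j`-th (diagonal) block replaced by `0`:
the matrix `P̂_j`. -/
def hatColumn (P : Matrix (BlkIdx n) (BlkIdx n) ℝ) (j : Fin t) :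
    Matrix (BlkIdx n) (Fin (n j)) ℝ :=
  fun p y => if p.1 = j then 0 else P p ⟨j, y⟩


lemma dot_bd (M : ∀ j : Fin t, Matrix (Fin (n j)) (Fin (n j)) ℝ)
    (x : BlkIdx n → ℝ) :
    x ⬝ᵥ (Matrix.blockDiagonal' M *ᵥ x)
      = ∑ j, (fun i => x ⟨j, i⟩) ⬝ᵥ (M j *ᵥ fun i => x ⟨j, i⟩) := by
  simp only [dotProduct, mulVec, dotProduct]
  rw [← Finset.univ_sigma_univ, Finset.sum_sigma]
  refine Finset.sum_congr rfl fun j _ => Finset.sum_congr rfl fun i _ => ?_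
  congr 1
  rw [Finset.sum_sigma]
  rw [Fintype.sum_eq_single j]
  · simp
  · intro k hk
    exact Finset.sum_eq_zero fun m _ => by
      rw [blockDiagonal'_apply_ne _ _ _ (Ne.symm hk), zero_mul]

lemma bd_posSemidef {M : ∀ j : Fin t, Matrix (Fin (n j)) (Fin (n j)) ℝ}
    (hM : ∀ j, (M j).PosSemidef) : (Matrix.blockDiagonal' M).PosSemidef := by
  refine Matrix.PosSemidef.of_dotProduct_mulVec_nonneg ?_ ?_
  · rw [Matrix.IsHermitian, Matrix.blockDiagonal'_conjTranspose]
    exact congrArg _ (funext fun j => (hM j).1)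
  · intro x
    simp only [star_trivial]
    rw [dot_bd]
    exact Finset.sum_nonneg fun j _ => by simpa using (hM j).dotProduct_mulVec_nonneg (fun i => x ⟨j, i⟩)

lemma bd_posDef {M : ∀ j : Fin t, Matrix (Fin (n j)) (Fin (n j)) ℝ}
    (hM : ∀ j, (M j).PosDef) : (Matrix.blockDiagonal' M).PosDef := by
  refine Matrix.PosDef.of_dotProduct_mulVec_pos (bd_posSemidef fun j => (hM j).posSemidef).1 fun x hx => ?_
  simp only [star_trivial]
  rw [dot_bd]
  obtain ⟨⟨j, i⟩, hp⟩ := Function.ne_iff.mp hx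
  refine Finset.sum_pos' (fun k _ => by simpa using ((hM k).posSemidef).dotProduct_mulVec_nonneg (fun i => x ⟨k, i⟩))
    ⟨j, Finset.mem_univ j, ?_⟩
  have hne : (fun i => x ⟨j, i⟩) ≠ 0 := Function.ne_iff.mpr ⟨i, hp⟩
  simpa using (hM j).dotProduct_mulVec_pos hne

lemma dblock_posDef {A : Matrix (BlkIdx n) (BlkIdx n) ℝ} (hA : A.PosDef) (j : Fin t) :
    (dblock A j).PosDef := by
  refine Matrix.PosDef.of_dotProduct_mulVec_pos ?_ ?_
  · show (A.submatrix (fun i : Fin (n j) => (⟨j, i⟩ : BlkIdx n)) fun i => ⟨j, i⟩)ᴴ = _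
    exact hA.1.submatrix _
  · intro y hy
    set x : BlkIdx n → ℝ := fun p => if h : p.1 = j then y (Fin.cast (by rw [h]) p.2) else 0
      with hxdef
    have hxj : ∀ i : Fin (n j), x ⟨j, i⟩ = y i := fun i => by simp [hxdef]
    have hx0 : ∀ (k : Fin t), k ≠ j → ∀ i : Fin (n k), x ⟨k, i⟩ = 0 := fun k hk i => by
      simp [hxdef, hk]
    obtain ⟨i0, hi0⟩ := Function.ne_iff.mp hy
    have hx : x ≠ 0 := Function.ne_iff.mpr ⟨⟨j, i0⟩, by rw [hxj]; exact hi0⟩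
    have hpos := hA.dotProduct_mulVec_pos hx
    simp only [star_trivial] at hpos ⊢
    have key : x ⬝ᵥ (A *ᵥ x) = y ⬝ᵥ (dblock A j *ᵥ y) := by
      simp only [dotProduct, mulVec, dotProduct]
      rw [← Finset.univ_sigma_univ, Finset.sum_sigma]
      rw [Fintype.sum_eq_single j]
      · refine Finset.sum_congr rfl fun i _ => ?_
        rw [hxj]
        congr 1
        rw [Finset.sum_sigma]
        rw [Fintype.sum_eq_single j]
        · exact Finset.sum_congr rfl fun m _ => by rw [hxj]; rfl
        · intro k hk
          exact Finset.sum_eq_zero fun m _ => by rw [hx0 k hk, mul_zero]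
      · intro k hk
        exact Finset.sum_eq_zero fun i _ => by rw [hx0 k hk, zero_mul]
    rw [← key]; exact hpos

lemma isBlockDiag_bdiag (A : Matrix (BlkIdx n) (BlkIdx n) ℝ) : IsBlockDiag (bdiag A) :=
  fun _ _ h => if_neg h

lemma isBlockDiag_blockDiagonal' (M : ∀ j : Fin t, Matrix (Fin (n j)) (Fin (n j)) ℝ) :
    IsBlockDiag (Matrix.blockDiagonal' M) := by
  rintro ⟨k, i⟩ ⟨l, m⟩ h
  exact Matrix.blockDiagonal'_apply_ne M i m h

lemma blockDiagonal'_dblock {A : Matrix (BlkIdx n) (BlkIdx n) ℝ} (hA : IsBlockDiag A) :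
    Matrix.blockDiagonal' (fun j => dblock A j) = A := by
  ext ⟨k, i⟩ ⟨l, m⟩
  rcases eq_or_ne k l with rfl | h
  · simp [dblock]
  · rw [Matrix.blockDiagonal'_apply_ne _ _ _ h, hA ⟨k, i⟩ ⟨l, m⟩ h]

lemma bdiag_conj {D E : Matrix (BlkIdx n) (BlkIdx n) ℝ} (M : Matrix (BlkIdx n) (BlkIdx n) ℝ)
    (hD : IsBlockDiag D) (hE : IsBlockDiag E) :
    bdiag (D * M * E) = D * bdiag M * E := by
  ext p q
  rcases eq_or_ne p.1 q.1 with hpq | hpq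
  · show (if p.1 = q.1 then (D * M * E) p q else 0) = _
    rw [if_pos hpq]
    simp only [Matrix.mul_apply]
    refine Finset.sum_congr rfl fun s _ => ?_
    rcases eq_or_ne s.1 q.1 with hs | hs
    · congr 1
      refine Finset.sum_congr rfl fun r _ => ?_
      rcases eq_or_ne r.1 p.1 with hr | hr
      · have : r.1 = s.1 := by rw [hr, hpq, ← hs]
        rw [show bdiag M r s = M r s from if_pos this]
      · rw [hD p r (Ne.symm hr), zero_mul, zero_mul]
    · rw [hE s q hs, mul_zero, mul_zero]
  · show (if p.1 = q.1 then (D * M * E) p q else 0) = _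
    rw [if_neg hpq]
    symm
    simp only [Matrix.mul_apply]
    refine Finset.sum_eq_zero fun s _ => ?_
    rcases eq_or_ne s.1 q.1 with hs | hs
    · rw [Finset.sum_eq_zero, zero_mul]
      intro r _
      rcases eq_or_ne r.1 p.1 with hr | hr
      · have : r.1 ≠ s.1 := by rw [hr, hs]; exact hpq
        rw [show bdiag M r s = 0 from if_neg this, mul_zero]
      · rw [hD p r (Ne.symm hr), zero_mul]
    · rw [hE s q hs, mul_zero]

open scoped MatrixOrder in
lemma exists_sqrt_psd {I : Type*} [Fintype I] [DecidableEq I] (A : Matrix I I ℝ)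
    (hA : A.PosSemidef) : ∃ R : Matrix I I ℝ, R.PosSemidef ∧ R * R = A :=
  ⟨CFC.sqrt A, Matrix.nonneg_iff_posSemidef.mp (CFC.sqrt_nonneg A),
    CFC.sqrt_mul_sqrt_self A hA.nonneg⟩

open scoped MatrixOrder in
lemma psd_eq_of_sq_eq_sq {I : Type*} [Fintype I] [DecidableEq I] {A B : Matrix I I ℝ}
    (hA : A.PosSemidef) (hB : B.PosSemidef) (h : A ^ 2 = B ^ 2) : A = B := by
  rw [sq, sq] at h
  exact (CFC.mul_self_eq_mul_self_iff A B hA.nonneg hB.nonneg).mp h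

/-- for nonsingular `W`, `Bdiag(Wᵀ W)` is symmetric positive definite and
`W * S⁻¹ ∈ 𝕎_{τ_n}` where `S` is the SPD square root of `Bdiag(Wᵀ W)`. -/
theorem normalize_mem_W {t : ℕ} {n : Fin t → ℕ} (hn : ∀ j, 0 < n j)
    (W : Matrix (BlkIdx n) (BlkIdx n) ℝ) (hW : IsUnit W) :
    (bdiag (Wᵀ * W)).PosDef ∧
      ∀ S : Matrix (BlkIdx n) (BlkIdx n) ℝ, S.PosDef → S * S = bdiag (Wᵀ * W) →
        MemW (W * S⁻¹) := by
  have hWtW : (Wᵀ * W).PosDef := by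
    refine Matrix.PosDef.of_dotProduct_mulVec_pos ?_ fun x hx => ?_
    · have := Matrix.isHermitian_conjTranspose_mul_self W
      rwa [Matrix.conjTranspose_eq_transpose_of_trivial] at this
    · simp only [star_trivial]
      rw [← Matrix.mulVec_mulVec, Matrix.dotProduct_mulVec, Matrix.vecMul_transpose]
      have hWx : W *ᵥ x ≠ 0 := fun h =>
        hx (Matrix.mulVec_injective_iff_isUnit.mpr hW (by rw [h, Matrix.mulVec_zero]))
      simpa using Matrix.dotProduct_star_self_pos_iff.mpr hWx
  have hblocks : ∀ j, (dblock (bdiag (Wᵀ * W)) j).PosDef := by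
    intro j
    have h : dblock (bdiag (Wᵀ * W)) j = dblock (Wᵀ * W) j := by
      funext x y; simp [dblock, bdiag]
    rw [h]; exact dblock_posDef hWtW j
  have hB : (bdiag (Wᵀ * W)).PosDef := by
    rw [← blockDiagonal'_dblock (isBlockDiag_bdiag (Wᵀ * W))]
    exact bd_posDef hblocks
  refine ⟨hB, fun S hS hSS => ?_⟩
  set R : ∀ j, Matrix (Fin (n j)) (Fin (n j)) ℝ :=
    fun j => Classical.choose (exists_sqrt_psd _ (hblocks j).posSemidef) with hRdef
  have hRps : ∀ j, (R j).PosSemidef := fun j => (Classical.choose_spec (exists_sqrt_psd _ (hblocks j).posSemidef)).1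
  have hRmul : ∀ j, R j * R j = dblock (bdiag (Wᵀ * W)) j :=
    fun j => (Classical.choose_spec (exists_sqrt_psd _ (hblocks j).posSemidef)).2
  have hT : (Matrix.blockDiagonal' R).PosSemidef := bd_posSemidef hRps
  have hTT : Matrix.blockDiagonal' R * Matrix.blockDiagonal' R = bdiag (Wᵀ * W) := by
    rw [← Matrix.blockDiagonal'_mul,
      show (fun j => R j * R j) = fun j => dblock (bdiag (Wᵀ * W)) j from funext hRmul]
    exact blockDiagonal'_dblock (isBlockDiag_bdiag _)
  have hST : S = Matrix.blockDiagonal' R :=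
    psd_eq_of_sq_eq_sq hS.posSemidef hT (by rw [sq, sq, hSS, hTT])
  have hRdet : ∀ j, IsUnit (R j).det := by
    intro j
    have h1 : (R j).det * (R j).det = (dblock (bdiag (Wᵀ * W)) j).det := by
      rw [← Matrix.det_mul, hRmul]
    have h2 : (dblock (bdiag (Wᵀ * W)) j).det ≠ 0 := (hblocks j).det_pos.ne'
    have hne : (R j).det ≠ 0 := fun h => h2 (by rw [← h1, h, mul_zero])
    exact hne.isUnit
  have hSinv : S⁻¹ = Matrix.blockDiagonal' fun j => (R j)⁻¹ := by
    apply Matrix.inv_eq_right_inv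
    rw [hST, ← Matrix.blockDiagonal'_mul,
      show (fun j => R j * (R j)⁻¹) = fun _ => 1 from
        funext fun j => Matrix.mul_nonsing_inv _ (hRdet j)]
    exact Matrix.blockDiagonal'_one
  have hSinvBD : IsBlockDiag S⁻¹ := by rw [hSinv]; exact isBlockDiag_blockDiagonal' _
  have hSsym : Sᵀ = S := by
    rw [← Matrix.conjTranspose_eq_transpose_of_trivial]
    exact hS.isHermitian
  have hSinvT : (S⁻¹)ᵀ = S⁻¹ := by rw [Matrix.transpose_nonsing_inv, hSsym]
  have hSd : IsUnit S.det := hS.det_pos.ne'.isUnit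
  refine ⟨hW.mul (Matrix.isUnit_nonsing_inv_iff.mpr hS.isUnit), ?_⟩
  have hexp : (W * S⁻¹)ᵀ * (W * S⁻¹) = S⁻¹ * (Wᵀ * W) * S⁻¹ := by
    rw [Matrix.transpose_mul, hSinvT]
    noncomm_ring
  rw [hexp, bdiag_conj _ hSinvBD hSinvBD, ← hSS,
    show S⁻¹ * (S * S) * S⁻¹ = (S⁻¹ * S) * (S * S⁻¹) by noncomm_ring,
    Matrix.nonsing_inv_mul _ hSd, Matrix.mul_nonsing_inv _ hSd, one_mul]

end JBD
end

section
/- Suppose 𝒜 = {A_i}_{i=1}^m is uniquely τ_n-block diagonalizable and W, W̃ ∈ 𝕎_{τ_n} are two τ_n-block diagonalizers of 𝒜, with Wᵀ A_i W = diag(A_i^{(11)},…,A_i^{(tt)}) and W̃ᵀ A_i W̃ = diag(Ã_i^{(11)},…,Ã_i^{(tt)}). Then ω_uniq(𝒜;W) = ω_uniq(𝒜;W̃), and if none of the sets {A_i^{(jj)}}_i can be further block diagonalized then also ω_rob(𝒜;W) = ω_rob(𝒜;W̃); i.e., the moduli of uniqueness and non-divisibility are independent of the choice of τ_n-block diagonalizer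 in 𝕎_{τ_n}. -/
open Matrix BigOperators Kronecker
open scoped ENNReal

namespace JBD

variable {t : ℕ} {n : Fin t → ℕ}

section SVrange

open Polynomial

variable {ι κ ι' κ' : Type*} [Fintype ι] [Fintype κ] [Fintype ι'] [Fintype κ']
  [DecidableEq κ] [DecidableEq κ']

lemma charpoly_conj (M O : Matrix κ κ ℝ) (h1 : Oᵀ * O = 1) :
    (Oᵀ * M * O).charpoly = M.charpoly := by
  classical
  unfold Matrix.charpoly
  have key : charmatrix (Oᵀ * M * O)
      = (C : ℝ →+* ℝ[X]).mapMatrix Oᵀ * charmatrix M * (C : ℝ →+* ℝ[X]).mapMatrix O := by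
    unfold charmatrix
    rw [Matrix.mul_sub, Matrix.sub_mul]
    congr 1
    · have comm : ∀ N : Matrix κ κ ℝ[X], N * Matrix.scalar κ (X : ℝ[X])
          = Matrix.scalar κ (X : ℝ[X]) * N := fun N =>
        (Matrix.scalar_commute (X : ℝ[X]) (fun r => Commute.all _ _) N).symm
      rw [comm, mul_assoc, ← _root_.map_mul, h1, _root_.map_one, mul_one]
    · rw [← _root_.map_mul, ← _root_.map_mul]
  have hdet : ((C : ℝ →+* ℝ[X]).mapMatrix Oᵀ).det * ((C : ℝ →+* ℝ[X]).mapMatrix O).det = 1 := by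
    have h3 : (C : ℝ →+* ℝ[X]).mapMatrix Oᵀ * (C : ℝ →+* ℝ[X]).mapMatrix O = 1 := by
      rw [← _root_.map_mul, h1, _root_.map_one]
    rw [← Matrix.det_mul, h3, Matrix.det_one]
  rw [key, Matrix.det_mul, Matrix.det_mul, mul_right_comm, hdet, one_mul]

lemma charpoly_diag (d : κ → ℝ) :
    (Matrix.diagonal d).charpoly = ∏ i, (X - C (d i)) := by
  classical
  unfold Matrix.charpoly
  have : charmatrix (Matrix.diagonal d) = Matrix.diagonal fun i => (X : ℝ[X]) - C (d i) := by
    ext i j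
    by_cases h : i = j
    · subst h; simp
    · simp [Matrix.charmatrix_apply_ne _ _ _ h, Matrix.diagonal_apply_ne _ h]
  rw [this, Matrix.det_diagonal]

lemma herm_roots (S : Matrix κ κ ℝ) (hS : S.IsHermitian) :
    S.charpoly.roots = Finset.univ.val.map hS.eigenvalues := by
  classical
  have hst := hS.spectral_theorem
  set U : Matrix κ κ ℝ := (hS.eigenvectorUnitary : Matrix κ κ ℝ) with hU
  have hOrth : Uᵀ * U = 1 := by
    have := (Matrix.mem_unitaryGroup_iff'.mp hS.eigenvectorUnitary.2)
    simpa [Matrix.star_eq_conjTranspose, Matrix.conjTranspose_eq_transpose_of_trivial] using this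
  have hstar : star U = Uᵀ := by
    simp [Matrix.star_eq_conjTranspose, Matrix.conjTranspose_eq_transpose_of_trivial]
  have hS' : S = (Uᵀ)ᵀ * Matrix.diagonal hS.eigenvalues * Uᵀ := by
    rw [Matrix.transpose_transpose]
    have : (RCLike.ofReal ∘ hS.eigenvalues : κ → ℝ) = hS.eigenvalues := rfl
    rw [← this, ← hstar]
    exact hst
  have horth2 : (Uᵀ)ᵀ * Uᵀ = 1 := by
    rw [Matrix.transpose_transpose]
    rw [mul_eq_one_comm]
    exact hOrth
  have hcp : S.charpoly = (Matrix.diagonal hS.eigenvalues).charpoly := by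
    conv_lhs => rw [hS']
    exact charpoly_conj _ _ horth2
  rw [hcp, charpoly_diag]
  have : (∏ i, (X - C (hS.eigenvalues i)))
      = ((Finset.univ.val.map hS.eigenvalues).map fun a => X - C a).prod := by
    rw [Multiset.map_map]
    rfl
  rw [this, Polynomial.roots_multiset_prod_X_sub_C]

lemma range_eq_of_multiset (f : κ → ℝ) (g : κ' → ℝ)
    (h : Finset.univ.val.map f = Finset.univ.val.map g) : Set.range f = Set.range g := by
  ext x
  constructor
  · rintro ⟨k, rfl⟩
    have : f k ∈ Finset.univ.val.map g := by rw [← h]; exact Multiset.mem_map_of_mem f (Finset.mem_univ k)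
    obtain ⟨k', _, hk'⟩ := Multiset.mem_map.mp this
    exact ⟨k', hk'⟩
  · rintro ⟨k, rfl⟩
    have : g k ∈ Finset.univ.val.map f := by rw [h]; exact Multiset.mem_map_of_mem g (Finset.mem_univ k)
    obtain ⟨k', _, hk'⟩ := Multiset.mem_map.mp this
    exact ⟨k', hk'⟩

lemma sv_range_eq (A : Matrix ι κ ℝ) (B : Matrix ι' κ' ℝ) (O : Matrix κ κ' ℝ)
    (h1 : Oᵀ * O = 1) (h2 : O * Oᵀ = 1) (hB : Bᵀ * B = Oᵀ * (Aᵀ * A) * O) :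
    Set.range (sv B) = Set.range (sv A) := by
  classical
  -- cardinalities agree
  have hcard : Fintype.card κ' = Fintype.card κ := by
    have ht : Matrix.trace (Oᵀ * O) = Matrix.trace (O * Oᵀ) := Matrix.trace_mul_comm _ _
    rw [h1, h2, Matrix.trace_one, Matrix.trace_one] at ht
    exact_mod_cast ht
  let e : κ' ≃ κ := Fintype.equivOfCardEq hcard
  set N := Aᵀ * A with hN
  set R : Matrix κ κ ℝ := O.submatrix id ⇑e.symm with hR
  have hRorth : Rᵀ * R = 1 := by
    ext i j
    simp only [Matrix.mul_apply, hR, Matrix.transpose_apply, Matrix.submatrix_apply, id]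
    have : ∑ p, O p (e.symm i) * O p (e.symm j) = (Oᵀ * O) (e.symm i) (e.symm j) := by
      simp [Matrix.mul_apply]
    rw [this, h1, Matrix.one_apply, Matrix.one_apply]
    by_cases hij : i = j
    · simp [hij]
    · rw [if_neg hij, if_neg (fun hc => hij (e.symm.injective hc))]
  have hsub : (Oᵀ * N * O).submatrix ⇑e.symm ⇑e.symm = Rᵀ * N * R := by
    ext i j
    simp only [Matrix.submatrix_apply, Matrix.mul_apply, hR, Matrix.transpose_apply,
      Matrix.submatrix_apply, id]
  have hch : (Bᵀ * B).charpoly = N.charpoly := by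
    have : (Bᵀ * B).charpoly = ((Oᵀ * N * O).submatrix ⇑e.symm ⇑e.symm).charpoly := by
      rw [hB]
      exact (Matrix.charpoly_reindex e (Oᵀ * N * O)).symm
    rw [this, hsub, charpoly_conj _ _ hRorth]
  have hHA : (Aᵀ * A).IsHermitian := by
    simpa [Matrix.conjTranspose_eq_transpose_of_trivial] using
      Matrix.isHermitian_conjTranspose_mul_self A
  have hHB : (Bᵀ * B).IsHermitian := by
    simpa [Matrix.conjTranspose_eq_transpose_of_trivial] using
      Matrix.isHermitian_conjTranspose_mul_self B
  have hmul : Finset.univ.val.map hHB.eigenvalues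
      = Finset.univ.val.map hHA.eigenvalues := by
    rw [← herm_roots _ hHB, ← herm_roots _ hHA, hch]
  have hrange := range_eq_of_multiset _ _ hmul
  have : Set.range (sv B) = Real.sqrt '' Set.range hHB.eigenvalues := by
    rw [← Set.range_comp]; rfl
  rw [this, hrange]
  rw [← Set.range_comp]; rfl

end SVrange


section Stack

lemma stack_sv_range {m : ℕ} {T T' C C' : Type*} [Fintype T] [Fintype T'] [Fintype C] [Fintype C']
    [DecidableEq C] [DecidableEq C'] [DecidableEq T] [DecidableEq T']
    (G : Matrix (Fin m × T) C ℝ) (G' : Matrix (Fin m × T') C' ℝ)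
    (L : Fin m → Matrix T C ℝ) (L' : Fin m → Matrix T' C' ℝ)
    (hG : ∀ i u v, G (i, u) v = L i u v) (hG' : ∀ i u v, G' (i, u) v = L' i u v)
    (P : Matrix T' T ℝ) (O : Matrix C C' ℝ)
    (hP : Pᵀ * P = 1) (hO1 : Oᵀ * O = 1) (hO2 : O * Oᵀ = 1)
    (hL : ∀ i, L' i = P * L i * O) :
    Set.range (sv G') = Set.range (sv G) := by
  classical
  set U : Matrix (Fin m × T') (Fin m × T) ℝ := (1 : Matrix (Fin m) (Fin m) ℝ) ⊗ₖ P with hUdef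
  have hGeq : G' = U * G * O := by
    ext ⟨i, u⟩ v
    rw [hG' i u v, hL i]
    simp only [Matrix.mul_apply, hUdef, Matrix.kroneckerMap_apply, Matrix.one_apply,
      Fintype.sum_prod_type, ite_mul, one_mul, zero_mul]
    refine Finset.sum_congr rfl fun c _ => ?_
    congr 1
    rw [Finset.sum_comm]
    simp only [Finset.sum_ite_eq, Finset.mem_univ, if_true, hG]
  have hUU : Uᵀ * U = 1 := by
    rw [hUdef, ← Matrix.kroneckerMap_transpose, Matrix.transpose_one,
      ← Matrix.mul_kronecker_mul, Matrix.one_mul, hP, Matrix.one_kronecker_one]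
  have hB : G'ᵀ * G' = Oᵀ * (Gᵀ * G) * O := by
    have expand : G'ᵀ * G' = Oᵀ * (Gᵀ * ((Uᵀ * U) * (G * O))) := by
      rw [hGeq]
      simp only [Matrix.transpose_mul, Matrix.mul_assoc]
    rw [expand, hUU, Matrix.one_mul]
    simp only [Matrix.mul_assoc]
  exact sv_range_eq G G' O hO1 hO2 hB

lemma kron_orth {a b a' b' : ℕ} (Q : Matrix (Fin a) (Fin a') ℝ) (R : Matrix (Fin b) (Fin b') ℝ)
    (hQ1 : Qᵀ * Q = 1) (hR1 : Rᵀ * R = 1) : (R ⊗ₖ Q)ᵀ * (R ⊗ₖ Q) = 1 := by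
  rw [← Matrix.kroneckerMap_transpose, ← Matrix.mul_kronecker_mul, hQ1, hR1,
    Matrix.one_kronecker_one]

lemma kron_orth' {a b a' b' : ℕ} (Q : Matrix (Fin a) (Fin a') ℝ) (R : Matrix (Fin b) (Fin b') ℝ)
    (hQ2 : Q * Qᵀ = 1) (hR2 : R * Rᵀ = 1) : (R ⊗ₖ Q) * (R ⊗ₖ Q)ᵀ = 1 := by
  rw [← Matrix.kroneckerMap_transpose, ← Matrix.mul_kronecker_mul, hQ2, hR2,
    Matrix.one_kronecker_one]

lemma kron_conj {a b a' b' : ℕ} (Q : Matrix (Fin a) (Fin a') ℝ) (R : Matrix (Fin b) (Fin b') ℝ)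
    (M : Matrix (Fin b) (Fin b) ℝ) (N : Matrix (Fin a) (Fin a) ℝ) :
    (R ⊗ₖ Q)ᵀ * (M ⊗ₖ N) * (R ⊗ₖ Q) = (Rᵀ * M * R) ⊗ₖ (Qᵀ * N * Q) := by
  rw [← Matrix.kroneckerMap_transpose, ← Matrix.mul_kronecker_mul, ← Matrix.mul_kronecker_mul]

lemma gjk_congr {m a b a' b' : ℕ}
    (Aj : Fin m → Matrix (Fin a) (Fin a) ℝ) (Ak : Fin m → Matrix (Fin b) (Fin b) ℝ)
    (Aj' : Fin m → Matrix (Fin a') (Fin a') ℝ) (Ak' : Fin m → Matrix (Fin b') (Fin b') ℝ)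
    (Q : Matrix (Fin a) (Fin a') ℝ) (R : Matrix (Fin b) (Fin b') ℝ)
    (hQ1 : Qᵀ * Q = 1) (hQ2 : Q * Qᵀ = 1) (hR1 : Rᵀ * R = 1) (hR2 : R * Rᵀ = 1)
    (hAj' : ∀ i, Aj' i = Qᵀ * Aj i * Q) (hAk' : ∀ i, Ak' i = Rᵀ * Ak i * R) :
    Set.range (sv (Gjk Aj' Ak')) = Set.range (sv (Gjk Aj Ak)) := by
  classical
  set X : Matrix (Fin b × Fin a) (Fin b' × Fin a') ℝ := R ⊗ₖ Q with hX
  have hX1 : Xᵀ * X = 1 := kron_orth Q R hQ1 hR1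
  have hX2 : X * Xᵀ = 1 := kron_orth' Q R hQ2 hR2
  set WO : Matrix ((Fin b × Fin a) ⊕ (Fin b × Fin a)) ((Fin b' × Fin a') ⊕ (Fin b' × Fin a')) ℝ :=
    Matrix.fromBlocks X 0 0 X with hWO
  have hWO1 : WOᵀ * WO = 1 := by
    rw [hWO, Matrix.fromBlocks_transpose, Matrix.fromBlocks_multiply]
    simp [hX1, Matrix.fromBlocks_one]
  have hWO2 : WO * WOᵀ = 1 := by
    rw [hWO, Matrix.fromBlocks_transpose, Matrix.fromBlocks_multiply]
    simp [hX2, Matrix.fromBlocks_one]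
  apply stack_sv_range (Gjk Aj Ak) (Gjk Aj' Ak')
    (fun i => Matrix.fromBlocks
      ((1 : Matrix (Fin b) (Fin b) ℝ) ⊗ₖ Aj i) ((Ak i)ᵀ ⊗ₖ (1 : Matrix (Fin a) (Fin a) ℝ))
      ((1 : Matrix (Fin b) (Fin b) ℝ) ⊗ₖ (Aj i)ᵀ) (Ak i ⊗ₖ (1 : Matrix (Fin a) (Fin a) ℝ)))
    (fun i => Matrix.fromBlocks
      ((1 : Matrix (Fin b') (Fin b') ℝ) ⊗ₖ Aj' i) ((Ak' i)ᵀ ⊗ₖ (1 : Matrix (Fin a') (Fin a') ℝ))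
      ((1 : Matrix (Fin b') (Fin b') ℝ) ⊗ₖ (Aj' i)ᵀ) (Ak' i ⊗ₖ (1 : Matrix (Fin a') (Fin a') ℝ)))
    (fun _ _ _ => rfl) (fun _ _ _ => rfl) WOᵀ WO
    (by rwa [Matrix.transpose_transpose]) hWO1 hWO2
  intro i
  rw [hWO, Matrix.fromBlocks_transpose, Matrix.fromBlocks_multiply, Matrix.fromBlocks_multiply]
  have e11 : Xᵀ * ((1 : Matrix (Fin b) (Fin b) ℝ) ⊗ₖ Aj i) * X
      = (1 : Matrix (Fin b') (Fin b') ℝ) ⊗ₖ Aj' i := by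
    rw [hX, kron_conj, Matrix.mul_one, hR1, hAj']
  have e12 : Xᵀ * ((Ak i)ᵀ ⊗ₖ (1 : Matrix (Fin a) (Fin a) ℝ)) * X
      = (Ak' i)ᵀ ⊗ₖ (1 : Matrix (Fin a') (Fin a') ℝ) := by
    rw [hX, kron_conj, Matrix.mul_one, hQ1, hAk']
    rw [Matrix.transpose_mul, Matrix.transpose_mul, Matrix.transpose_transpose, Matrix.mul_assoc]
  have e21 : Xᵀ * ((1 : Matrix (Fin b) (Fin b) ℝ) ⊗ₖ (Aj i)ᵀ) * X
      = (1 : Matrix (Fin b') (Fin b') ℝ) ⊗ₖ (Aj' i)ᵀ := by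
    rw [hX, kron_conj, Matrix.mul_one, hR1, hAj']
    rw [Matrix.transpose_mul, Matrix.transpose_mul, Matrix.transpose_transpose, Matrix.mul_assoc]
  have e22 : Xᵀ * (Ak i ⊗ₖ (1 : Matrix (Fin a) (Fin a) ℝ)) * X
      = Ak' i ⊗ₖ (1 : Matrix (Fin a') (Fin a') ℝ) := by
    rw [hX, kron_conj, Matrix.mul_one, hQ1, hAk']
  simp only [Matrix.transpose_zero, Matrix.zero_mul, Matrix.mul_zero, add_zero, zero_add,
    ← Matrix.mul_assoc]
  rw [e11, e12, e21, e22]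

end Stack


section Swap

/-- sv-range is invariant under reindexing by equivalences. -/
lemma sv_range_submatrix {ι κ ι' κ' : Type*} [Fintype ι] [Fintype κ] [Fintype ι'] [Fintype κ']
    [DecidableEq κ] [DecidableEq κ'] (A : Matrix ι κ ℝ) (e₁ : ι' ≃ ι) (e₂ : κ' ≃ κ) :
    Set.range (sv (A.submatrix ⇑e₁ ⇑e₂)) = Set.range (sv A) := by
  classical
  set O : Matrix κ κ' ℝ := fun c c' => if c = e₂ c' then 1 else 0 with hO
  have hOapp : ∀ c c', O c c' = if c = e₂ c' then 1 else 0 := fun _ _ => rfl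
  have hO1 : Oᵀ * O = 1 := by
    ext c' d'
    simp only [Matrix.mul_apply, hOapp, Matrix.transpose_apply, ite_mul, one_mul, zero_mul,
      Finset.sum_ite_eq', Finset.mem_univ, if_true, Matrix.one_apply]
    by_cases h : c' = d'
    · simp [h]
    · rw [if_neg (fun hc => h (e₂.injective hc)), if_neg h]
  have hO2 : O * Oᵀ = 1 := by
    ext c d
    simp only [Matrix.mul_apply, hOapp, Matrix.transpose_apply, Matrix.one_apply, mul_ite, mul_one,
      mul_zero, ite_mul, one_mul, zero_mul]
    by_cases h : c = d
    · subst h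
      rw [Finset.sum_eq_single (e₂.symm c)]
      · simp
      · intro x _ hx
        have hcx : ¬ c = e₂ x := fun hc => hx (by rw [hc, Equiv.symm_apply_apply])
        simp [hcx]
      · simp
    · have : ∀ x ∈ Finset.univ, (if d = e₂ x then if c = e₂ x then (1:ℝ) else 0 else 0) = 0 := by
        intro x _
        by_cases h1 : d = e₂ x
        · rw [if_pos h1, if_neg (fun hc => h (hc.trans h1.symm))]
        · simp [h1]
      rw [Finset.sum_congr rfl this]
      simp [h]
  apply sv_range_eq A _ O hO1 hO2
  have hconj : Oᵀ * (Aᵀ * A) * O = (Aᵀ * A).submatrix ⇑e₂ ⇑e₂ := by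
    ext c' d'
    simp [Matrix.mul_apply, hOapp, ite_mul, one_mul, zero_mul, mul_ite, mul_one, mul_zero,
      Finset.sum_ite_eq', Matrix.submatrix_apply]
  rw [hconj]
  ext c' d'
  simp only [Matrix.mul_apply, Matrix.transpose_apply, Matrix.submatrix_apply]
  exact Equiv.sum_comp e₁ fun k => A k (e₂ c') * A k (e₂ d')

lemma gjk_swap {m a b : ℕ} (Aj : Fin m → Matrix (Fin a) (Fin a) ℝ)
    (Ak : Fin m → Matrix (Fin b) (Fin b) ℝ) :
    Set.range (sv (Gjk Ak Aj)) = Set.range (sv (Gjk Aj Ak)) := by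
  classical
  let ρ : ((Fin a × Fin b) ⊕ (Fin a × Fin b)) ≃ ((Fin b × Fin a) ⊕ (Fin b × Fin a)) :=
    (Equiv.sumCongr (Equiv.prodComm _ _) (Equiv.prodComm _ _)).trans (Equiv.sumComm _ _)
  have key : Gjk Ak Aj = (Gjk Aj Ak).submatrix
      ⇑(Equiv.prodCongr (Equiv.refl (Fin m)) ρ) ⇑ρ := by
    ext ⟨i, u⟩ v
    rcases u with ⟨p, q⟩ | ⟨p, q⟩ <;> rcases v with ⟨p', q'⟩ | ⟨p', q'⟩ <;>
      simp [Gjk, ρ, Matrix.one_apply, mul_comm]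
  rw [key]
  exact sv_range_submatrix _ _ _

end Swap

section GjjSec

lemma shuffle_kron {a a' : ℕ} (Xm Ym : Matrix (Fin a) (Fin a') ℝ) :
    shuffle a * (Xm ⊗ₖ Ym) = (Ym ⊗ₖ Xm) * shuffle a' := by
  ext ⟨q, p⟩ ⟨q', p'⟩
  have hcond : ∀ x : Fin a' × Fin a', ((q', p') = x.swap) ↔ (x = (p', q')) := by
    intro x
    constructor
    · intro h
      rw [show x = x.swap.swap from (Prod.swap_swap x).symm, ← h]
      rfl
    · intro h
      subst h
      rfl
  simp only [Matrix.mul_apply, shuffle, Matrix.kroneckerMap_apply, ite_mul, one_mul, zero_mul,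
    mul_ite, mul_one, mul_zero, hcond]
  simp only [Finset.sum_ite_eq', Finset.mem_univ, if_true]
  exact mul_comm _ _

lemma gjj_congr {m a a' : ℕ} (Aj : Fin m → Matrix (Fin a) (Fin a) ℝ)
    (Aj' : Fin m → Matrix (Fin a') (Fin a') ℝ) (Q : Matrix (Fin a) (Fin a') ℝ)
    (hQ1 : Qᵀ * Q = 1) (hQ2 : Q * Qᵀ = 1)
    (hAj' : ∀ i, Aj' i = Qᵀ * Aj i * Q) :
    Set.range (sv (Gjj Aj')) = Set.range (sv (Gjj Aj)) := by
  classical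
  apply stack_sv_range (Gjj Aj) (Gjj Aj')
    (fun i => (1 : Matrix (Fin a) (Fin a) ℝ) ⊗ₖ Aj i
      - ((Aj i)ᵀ ⊗ₖ (1 : Matrix (Fin a) (Fin a) ℝ)) * shuffle a)
    (fun i => (1 : Matrix (Fin a') (Fin a') ℝ) ⊗ₖ Aj' i
      - ((Aj' i)ᵀ ⊗ₖ (1 : Matrix (Fin a') (Fin a') ℝ)) * shuffle a')
    (fun _ _ _ => rfl) (fun _ _ _ => rfl) ((Q ⊗ₖ Q)ᵀ) (Q ⊗ₖ Q)
    (by rw [Matrix.transpose_transpose]; exact kron_orth' Q Q hQ2 hQ2)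
    (kron_orth Q Q hQ1 hQ1) (kron_orth' Q Q hQ2 hQ2)
  intro i
  rw [Matrix.mul_sub, Matrix.sub_mul]
  congr 1
  · rw [kron_conj Q Q 1 (Aj i), Matrix.mul_one, hQ1, hAj']
  · rw [Matrix.mul_assoc ((Q ⊗ₖ Q)ᵀ) _ _, Matrix.mul_assoc _ (shuffle a) _,
      shuffle_kron Q Q, ← Matrix.mul_assoc, ← Matrix.mul_assoc,
      kron_conj Q Q ((Aj i)ᵀ) 1, Matrix.mul_one, hQ1, hAj']
    rw [Matrix.transpose_mul, Matrix.transpose_mul, Matrix.transpose_transpose, Matrix.mul_assoc]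

end GjjSec


section Extract

lemma perm_conj {I : Type*} [DecidableEq I] [Fintype I] (σ : Equiv.Perm I)
    (E : Matrix I I ℝ) :
    (σ.permMatrix ℝ)ᵀ * E * (σ.permMatrix ℝ) = E.submatrix ⇑σ.symm ⇑σ.symm := by
  have h1 : (σ.permMatrix ℝ)ᵀ * E = E.submatrix ⇑σ.symm id := by
    have h2 := congrArg Matrix.transpose (PEquiv.mul_toMatrix_toPEquiv (Eᵀ) σ)
    rw [Matrix.transpose_mul, Matrix.transpose_transpose] at h2
    rw [h2]
    ext i j
    simp [Matrix.submatrix_apply]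
  rw [h1, PEquiv.mul_toMatrix_toPEquiv]
  ext i j
  simp

lemma exists_tau_Q {t m : ℕ} {n : Fin t → ℕ} (hn : ∀ j, 0 < n j)
    (A : Fin m → Matrix (BlkIdx n) (BlkIdx n) ℝ) (hU : UniquelyBD A)
    (W W' : Matrix (BlkIdx n) (BlkIdx n) ℝ)
    (hWmem : MemW W) (hW'mem : MemW W')
    (hW : IsDiagonalizer A W) (hW' : IsDiagonalizer A W')
    (Ab Ab' : ∀ j : Fin t, Fin m → Matrix (Fin (n j)) (Fin (n j)) ℝ)
    (hAb : ∀ j i, Ab j i = dblock (Wᵀ * A i * W) j)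
    (hAb' : ∀ j i, Ab' j i = dblock (W'ᵀ * A i * W') j) :
    ∃ τ : Equiv.Perm (Fin t), (∀ j, n (τ j) = n j) ∧
      ∀ j : Fin t, ∃ Q : Matrix (Fin (n j)) (Fin (n (τ j))) ℝ,
        Qᵀ * Q = 1 ∧ Q * Qᵀ = 1 ∧ ∀ i, Ab' (τ j) i = Qᵀ * (Ab j i) * Q := by
  classical
  obtain ⟨D, P, hD, hDunit, hPbd, hW'eq⟩ := hU.2 W W' hW hW'
  obtain ⟨⟨σ, hPσ⟩, hPpres⟩ := hPbd
  -- σ preserves blocks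
  have hblk : ∀ a b : BlkIdx n, a.1 = b.1 → (σ a).1 = (σ b).1 := by
    intro a b hab
    by_contra hne
    set E : Matrix (BlkIdx n) (BlkIdx n) ℝ := fun p q => if p = a ∧ q = b then 1 else 0 with hE
    have hEbd : IsBlockDiag E := by
      intro p q hpq
      simp only [hE]
      by_cases hc : p = a ∧ q = b
      · obtain ⟨h1, h2⟩ := hc
        subst h1
        subst h2
        exact absurd hab hpq
      · rw [if_neg hc]
    have hzero := hPpres E hEbd (σ a) (σ b) hne
    rw [hPσ, perm_conj] at hzero
    rw [Matrix.submatrix_apply] at hzero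
    simp [hE] at hzero
  -- the block permutation τ
  set τ : Fin t → Fin t := fun j => (σ ⟨j, ⟨0, hn j⟩⟩).1 with hτ
  have hστ : ∀ (j : Fin t) (x : Fin (n j)), (σ ⟨j, x⟩).1 = τ j := fun j x =>
    hblk ⟨j, x⟩ ⟨j, ⟨0, hn j⟩⟩ rfl
  have hτsurj : Function.Surjective τ := by
    intro k
    obtain ⟨p, hp⟩ := σ.surjective ⟨k, ⟨0, hn k⟩⟩
    refine ⟨p.1, ?_⟩
    have := hστ p.1 p.2
    rw [Sigma.eta, hp] at this
    exact this.symm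
  have hτbij : Function.Bijective τ := Finite.surjective_iff_bijective.mp hτsurj
  set τe : Equiv.Perm (Fin t) := Equiv.ofBijective τ hτbij with hτe
  -- sizes are preserved
  have hle : ∀ j, n j ≤ n (τ j) := by
    intro j
    have hlt : ∀ x : Fin (n j), ((σ ⟨j, x⟩).2 : ℕ) < n (τ j) := by
      intro x
      exact lt_of_lt_of_le (σ ⟨j, x⟩).2.2 (le_of_eq (congrArg n (hστ j x)))
    have hinj : Function.Injective (fun x : Fin (n j) => (⟨(σ ⟨j, x⟩).2, hlt x⟩ : Fin (n (τ j)))) := by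
      intro x y hxy
      have hval : ((σ ⟨j, x⟩).2 : ℕ) = ((σ ⟨j, y⟩).2 : ℕ) := by
        simpa [Fin.ext_iff] using hxy
      have h1 : (σ ⟨j, x⟩).1 = (σ ⟨j, y⟩).1 := by rw [hστ j x, hστ j y]
      have : σ ⟨j, x⟩ = σ ⟨j, y⟩ := by
        rcases hseq : σ ⟨j, x⟩ with ⟨k1, z1⟩
        rcases hseq' : σ ⟨j, y⟩ with ⟨k2, z2⟩
        rw [hseq, hseq'] at h1 hval
        subst h1
        simp only [Sigma.mk.inj_iff, heq_eq_eq, true_and]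
        exact Fin.ext hval
      have := σ.injective this
      simpa using this
    simpa using Fintype.card_le_of_injective _ hinj
  have hnτ : ∀ j, n (τ j) = n j := by
    have hsum : ∑ j, n (τ j) = ∑ j, n j := Equiv.sum_comp τe n
    have := (Finset.sum_eq_sum_iff_of_le (fun j _ => hle j)).mp hsum.symm
    intro j
    exact (this j (Finset.mem_univ j)).symm
  have hτinj : Function.Injective τ := hτbij.1
  -- the matrix V = D * P
  set V : Matrix (BlkIdx n) (BlkIdx n) ℝ := D * P with hV
  have hVapp : ∀ p q : BlkIdx n, V p q = D p (σ.symm q) := by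
    intro p q
    rw [hV, hPσ]
    rw [show D * Equiv.Perm.permMatrix ℝ σ = D.submatrix id ⇑σ.symm from
      PEquiv.mul_toMatrix_toPEquiv D σ]
    rfl
  have hq1 : ∀ q : BlkIdx n, τ ((σ.symm q).1) = q.1 := by
    intro q
    have := hστ (σ.symm q).1 (σ.symm q).2
    rw [Sigma.eta, Equiv.apply_symm_apply] at this
    exact this.symm
  have hVsupp : ∀ (p : BlkIdx n) (j : Fin t) (y : Fin (n (τ j))),
      p.1 ≠ j → V p ⟨τ j, y⟩ = 0 := by
    intro p j y hpj
    rw [hVapp]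
    apply hD
    intro hc
    apply hpj
    rw [hc]
    exact hτinj (hq1 ⟨τ j, y⟩)
  -- W' = W * V
  have hW'V : W' = W * V := by rw [hW'eq, hV, Matrix.mul_assoc]
  -- the blocks of V
  set Q : ∀ j : Fin t, Matrix (Fin (n j)) (Fin (n (τ j))) ℝ :=
    fun j x y => V ⟨j, x⟩ ⟨τ j, y⟩ with hQ
  -- key sum computation
  have hsumsig : ∀ f : BlkIdx n → ℝ, ∑ p, f p = ∑ k, ∑ z : Fin (n k), f ⟨k, z⟩ := by
    intro f
    rw [← Finset.univ_sigma_univ, Finset.sum_sigma]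
  have key : ∀ (M : Matrix (BlkIdx n) (BlkIdx n) ℝ) (j : Fin t) (x y : Fin (n (τ j))),
      (Vᵀ * M * V) ⟨τ j, x⟩ ⟨τ j, y⟩ = ((Q j)ᵀ * dblock M j * Q j) x y := by
    intro M j x y
    have inner : ∀ q : BlkIdx n, (Vᵀ * M) ⟨τ j, x⟩ q
        = ∑ x' : Fin (n j), V ⟨j, x'⟩ ⟨τ j, x⟩ * M ⟨j, x'⟩ q := by
      intro q
      rw [Matrix.mul_apply, hsumsig]
      rw [Finset.sum_eq_single j]
      · rfl
      · intro k _ hk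
        apply Finset.sum_eq_zero
        intro z _
        rw [Matrix.transpose_apply, hVsupp ⟨k, z⟩ j x hk, zero_mul]
      · intro h
        exact absurd (Finset.mem_univ j) h
    rw [Matrix.mul_apply, hsumsig]
    rw [Finset.sum_eq_single j]
    · rw [Matrix.mul_apply]
      apply Finset.sum_congr rfl
      intro y' _
      rw [inner ⟨j, y'⟩, Matrix.mul_apply]
      rfl
    · intro k _ hk
      apply Finset.sum_eq_zero
      intro z _
      rw [hVsupp ⟨k, z⟩ j y hk, mul_zero]
    · intro h
      exact absurd (Finset.mem_univ j) h
  -- conjugation identity for W-related matrices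
  have hconj : ∀ M : Matrix (BlkIdx n) (BlkIdx n) ℝ,
      W'ᵀ * M * W' = Vᵀ * (Wᵀ * M * W) * V := by
    intro M
    rw [hW'V, Matrix.transpose_mul]
    simp only [Matrix.mul_assoc]
  -- diag blocks of WᵀW and W'ᵀW' are identity
  have hdw : ∀ (j : Fin t) (x y : Fin (n j)), (Wᵀ * W) ⟨j, x⟩ ⟨j, y⟩
      = (1 : Matrix (Fin (n j)) (Fin (n j)) ℝ) x y := by
    intro j x y
    have := congrFun (congrFun hWmem.2 ⟨j, x⟩) ⟨j, y⟩
    simp only [bdiag, eq_self_iff_true, if_true] at this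
    rw [this]
    by_cases h : x = y
    · subst h
      simp
    · rw [Matrix.one_apply_ne (fun hc => h (by simpa using hc)), Matrix.one_apply_ne h]
  have hdw' : ∀ (j : Fin t) (x y : Fin (n j)), (W'ᵀ * W') ⟨j, x⟩ ⟨j, y⟩
      = (1 : Matrix (Fin (n j)) (Fin (n j)) ℝ) x y := by
    intro j x y
    have := congrFun (congrFun hW'mem.2 ⟨j, x⟩) ⟨j, y⟩
    simp only [bdiag, eq_self_iff_true, if_true] at this
    rw [this]
    by_cases h : x = y
    · subst h
      simp
    · rw [Matrix.one_apply_ne (fun hc => h (by simpa using hc)), Matrix.one_apply_ne h]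
  -- orthogonality of Q j
  have hQorth : ∀ j : Fin t, (Q j)ᵀ * Q j = 1 := by
    intro j
    ext x y
    have h1 : (Vᵀ * (Wᵀ * W) * V) ⟨τ j, x⟩ ⟨τ j, y⟩
        = ((Q j)ᵀ * dblock (Wᵀ * W) j * Q j) x y := key _ j x y
    have h2 : W'ᵀ * W' = Vᵀ * (Wᵀ * W) * V := by
      rw [hW'V, Matrix.transpose_mul]
      simp only [Matrix.mul_assoc]
    have h3 : dblock (Wᵀ * W) j = 1 := by
      ext u v
      exact hdw j u v
    rw [h3, Matrix.mul_one] at h1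
    rw [← h1, ← h2, hdw' (τ j) x y]
  have hQorth2 : ∀ j : Fin t, Q j * (Q j)ᵀ = 1 := by
    intro j
    have e := finCongr (hnτ j)
    set Qs : Matrix (Fin (n j)) (Fin (n j)) ℝ := (Q j).submatrix id ⇑e.symm with hQs
    have h1 : Qsᵀ * Qs = 1 := by
      ext u v
      simp only [hQs, Matrix.mul_apply, Matrix.transpose_apply, Matrix.submatrix_apply, id]
      have := congrFun (congrFun (hQorth j) (e.symm u)) (e.symm v)
      simp only [Matrix.mul_apply, Matrix.transpose_apply] at this
      rw [this, Matrix.one_apply, Matrix.one_apply]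
      by_cases h : u = v
      · simp [h]
      · rw [if_neg (fun hc => h (e.symm.injective hc)), if_neg h]
    have h2 : Qs * Qsᵀ = 1 := mul_eq_one_comm.mp h1
    ext p r
    have := congrFun (congrFun h2 p) r
    simp only [hQs, Matrix.mul_apply, Matrix.transpose_apply, Matrix.submatrix_apply, id] at this
    rw [← this, Matrix.mul_apply]
    exact (Equiv.sum_comp e.symm fun z => Q j p z * Q j r z).symm
  refine ⟨τe, hnτ, fun j => ⟨Q j, hQorth j, hQorth2 j, fun i => ?_⟩⟩
  ext x y
  show Ab' (τ j) i x y = ((Q j)ᵀ * Ab j i * Q j) x y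
  rw [hAb' (τ j) i, hAb j i]
  show (W'ᵀ * A i * W') ⟨τ j, x⟩ ⟨τ j, y⟩ = _
  rw [hconj (A i), key (Wᵀ * A i * W) j x y]

end Extract



section Congr

open Polynomial

lemma sigmaMin_congr {I J I' J' : Type*} [Fintype I] [Fintype J] [Fintype I'] [Fintype J']
    [DecidableEq J] [DecidableEq J'] {A : Matrix I J ℝ} {B : Matrix I' J' ℝ}
    (h : Set.range (sv B) = Set.range (sv A)) : sigmaMin B = sigmaMin A := by
  show sInf (Set.range (sv B)) = sInf (Set.range (sv A))
  rw [h]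

lemma minNonzeroSV_congr {I J I' J' : Type*} [Fintype I] [Fintype J] [Fintype I'] [Fintype J']
    [DecidableEq J] [DecidableEq J'] {A : Matrix I J ℝ} {B : Matrix I' J' ℝ}
    (h : Set.range (sv B) = Set.range (sv A)) : minNonzeroSV B = minNonzeroSV A := by
  unfold minNonzeroSV
  have hset : {s : ℝ | (∃ k, sv B k = s) ∧ s ≠ 0} = {s | (∃ k, sv A k = s) ∧ s ≠ 0} := by
    ext s
    have hs := Set.ext_iff.mp h s
    simp only [Set.mem_range] at hs
    simp only [Set.mem_setOf_eq, hs]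
  rw [hset]

end Congr

/-- Theorem 2.3: for a uniquely `τ_n`-block diagonalizable `𝒜`, the moduli
`ω_uniq` and `ω_rob` do not depend on the choice of diagonalizer in `𝕎_{τ_n}`. -/
theorem omegaUniq_omegaRob_independent {t m : ℕ} {n : Fin t → ℕ} (hn : ∀ j, 0 < n j)
    (A : Fin m → Matrix (BlkIdx n) (BlkIdx n) ℝ) (hU : UniquelyBD A)
    (W W' : Matrix (BlkIdx n) (BlkIdx n) ℝ)
    (hWmem : MemW W) (hW'mem : MemW W')
    (hW : IsDiagonalizer A W) (hW' : IsDiagonalizer A W')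
    (Ab Ab' : ∀ j : Fin t, Fin m → Matrix (Fin (n j)) (Fin (n j)) ℝ)
    (hAb : ∀ j i, Ab j i = dblock (Wᵀ * A i * W) j)
    (hAb' : ∀ j i, Ab' j i = dblock (W'ᵀ * A i * W') j) :
    omegaUniq Ab = omegaUniq Ab' ∧
      ((∀ j, ¬ CanSplit (Ab j)) → omegaRob Ab = omegaRob Ab') := by
  classical
  obtain ⟨τ, hnτ, hQ⟩ := exists_tau_Q hn A hU W W' hWmem hW'mem hW hW' Ab Ab' hAb hAb'
  have pairEq : ∀ j k : Fin t,
      sigmaMin (Gjk (Ab' (τ j)) (Ab' (τ k))) = sigmaMin (Gjk (Ab j) (Ab k)) := by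
    intro j k
    obtain ⟨Qj, hQj1, hQj2, hQj3⟩ := hQ j
    obtain ⟨Qk, hQk1, hQk2, hQk3⟩ := hQ k
    exact sigmaMin_congr (gjk_congr (Ab j) (Ab k) (Ab' (τ j)) (Ab' (τ k)) Qj Qk
      hQj1 hQj2 hQk1 hQk2 hQj3 hQk3)
  have swapEq : ∀ {a b : ℕ} (X : Fin m → Matrix (Fin a) (Fin a) ℝ)
      (Y : Fin m → Matrix (Fin b) (Fin b) ℝ), sigmaMin (Gjk Y X) = sigmaMin (Gjk X Y) :=
    fun X Y => sigmaMin_congr (gjk_swap X Y)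
  have hU1 : omegaUniq Ab = omegaUniq Ab' := by
    have hrange : Set.range (fun p : {p : Fin t × Fin t // p.1 < p.2} =>
        sigmaMin (Gjk (Ab p.1.1) (Ab p.1.2)))
        = Set.range (fun p : {p : Fin t × Fin t // p.1 < p.2} =>
        sigmaMin (Gjk (Ab' p.1.1) (Ab' p.1.2))) := by
      ext x
      constructor
      · rintro ⟨⟨⟨j, k⟩, hjk⟩, rfl⟩
        have hne : τ j ≠ τ k := fun h => (ne_of_lt hjk) (τ.injective h)
        rcases hne.lt_or_gt with h | h
        · exact ⟨⟨(τ j, τ k), h⟩, pairEq j k⟩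
        · refine ⟨⟨(τ k, τ j), h⟩, ?_⟩
          calc sigmaMin (Gjk (Ab' (τ k)) (Ab' (τ j)))
              = sigmaMin (Gjk (Ab' (τ j)) (Ab' (τ k))) := swapEq _ _
            _ = sigmaMin (Gjk (Ab j) (Ab k)) := pairEq j k
      · rintro ⟨⟨⟨j, k⟩, hjk⟩, rfl⟩
        obtain ⟨j0, rfl⟩ := τ.surjective j
        obtain ⟨k0, rfl⟩ := τ.surjective k
        have hne : j0 ≠ k0 := fun h => (ne_of_lt hjk) (congrArg τ h)
        rcases hne.lt_or_gt with h | h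
        · exact ⟨⟨(j0, k0), h⟩, (pairEq j0 k0).symm⟩
        · refine ⟨⟨(k0, j0), h⟩, ?_⟩
          calc sigmaMin (Gjk (Ab k0) (Ab j0))
              = sigmaMin (Gjk (Ab j0) (Ab k0)) := swapEq _ _
            _ = sigmaMin (Gjk (Ab' (τ j0)) (Ab' (τ k0))) := (pairEq j0 k0).symm
    show sInf (Set.range fun p : {p : Fin t × Fin t // p.1 < p.2} =>
        sigmaMin (Gjk (Ab p.1.1) (Ab p.1.2))) = _
    rw [hrange]
    rfl
  refine ⟨hU1, fun _ => ?_⟩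
  have hGjjEq : ∀ j, minNonzeroSV (Gjj (Ab' (τ j))) = minNonzeroSV (Gjj (Ab j)) := by
    intro j
    obtain ⟨Qj, h1, h2, h3⟩ := hQ j
    exact minNonzeroSV_congr (gjj_congr (Ab j) (Ab' (τ j)) Qj h1 h2 h3)
  show omegaRob Ab = omegaRob Ab'
  unfold omegaRob
  rw [← Equiv.iInf_comp
    (g := fun j => ⨅ (_ : 1 < n j), ENNReal.ofReal (minNonzeroSV (Gjj (Ab' j)))) τ]
  apply iInf_congr
  intro j
  rw [hGjjEq j, hnτ j]


end JBD
end
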